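/- Let H be a real Hilbert space and F : H → ℝ a differentiable function whose gradient ∇F is L-Lipschitz for some L ≥ 0. Let F* ∈ ℝ and μ > 0 be such that F(θ) ≥ F* and (1/2)·‖∇F(θ)‖² ≥ μ·(F(θ) − F*) for all θ ∈ H. Fix θ ∈ H, η > 0, G ≥ 0, and vectors U, B, E ∈ H with U = ∇F(θ) − B + E and ‖U‖ ≤ G, and set θ' = θ − η·U. Then F(θ') − F* ≤ (1 − η·μ)·(F(θ) − F*) + η·‖B‖² + η·‖E‖² + (L·η²·G²)/2. -/

import Mathlib

open scoped RealInnerProductSpace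

/-- Descent lemma for functions with Lipschitz gradient. -/
lemma descent_lemma_aux {H : Type*} [NormedAddCommGroup H] [InnerProductSpace ℝ H]
    [CompleteSpace H]
    (F : H → ℝ) (hF : Differentiable ℝ F) (L : ℝ)
    (hlip : ∀ x y : H, ‖gradient F x - gradient F y‖ ≤ L * ‖x - y‖) (x v : H) :
    F (x + v) ≤ F x + ⟪gradient F x, v⟫ + L / 2 * ‖v‖ ^ 2 := by
  have hd : ∀ t : ℝ, HasDerivAt (fun t : ℝ => F (x + t • v))
      (⟪gradient F (x + t • v), v⟫) t := by
    intro t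
    have hp : HasDerivAt (fun t : ℝ => x + t • v) v t := by
      simpa using ((hasDerivAt_id t).smul_const v).const_add x
    have hg := (hF (x + t • v)).hasGradientAt
    have := hg.hasFDerivAt.comp_hasDerivAt t hp
    rw [InnerProductSpace.toDual_apply_apply] at this
    exact this
  have hfd : ∀ t : ℝ, HasDerivAt
      (fun t : ℝ => F (x + t • v) - t * ⟪gradient F x, v⟫)
      (⟪gradient F (x + t • v), v⟫ - ⟪gradient F x, v⟫) t := by
    intro t
    have h := (hd t).sub ((hasDerivAt_id t).mul_const (⟪gradient F x, v⟫))
    simp only [one_mul] at h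
    exact h
  have hBd : ∀ t : ℝ, HasDerivAt
      (fun t : ℝ => F x + L * ‖v‖ ^ 2 * t ^ 2 / 2) (L * ‖v‖ ^ 2 * t) t := by
    intro t
    have h := (((hasDerivAt_pow 2 t).const_mul (L * ‖v‖ ^ 2)).div_const 2).const_add (F x)
    convert h using 1
    · rfl
    · rfl
    push_cast
    ring
  have hbound : ∀ t ∈ Set.Ico (0 : ℝ) 1,
      ⟪gradient F (x + t • v), v⟫ - ⟪gradient F x, v⟫ ≤ L * ‖v‖ ^ 2 * t := by
    intro t ht
    have h1 : ⟪gradient F (x + t • v), v⟫ - ⟪gradient F x, v⟫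
        = ⟪gradient F (x + t • v) - gradient F x, v⟫ := by
      rw [inner_sub_left]
    have h2 : ⟪gradient F (x + t • v) - gradient F x, v⟫
        ≤ ‖gradient F (x + t • v) - gradient F x‖ * ‖v‖ :=
      real_inner_le_norm _ _
    have h3 : ‖gradient F (x + t • v) - gradient F x‖ ≤ L * ‖t • v‖ := by
      simpa using hlip (x + t • v) x
    have ht0 : 0 ≤ t := ht.1
    have h4 : ‖t • v‖ = t * ‖v‖ := by
      rw [norm_smul, Real.norm_eq_abs, abs_of_nonneg ht0]
    have hv : 0 ≤ ‖v‖ := norm_nonneg v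
    rw [h1]
    calc ⟪gradient F (x + t • v) - gradient F x, v⟫
        ≤ ‖gradient F (x + t • v) - gradient F x‖ * ‖v‖ := h2
      _ ≤ L * (t * ‖v‖) * ‖v‖ := by
          apply mul_le_mul_of_nonneg_right _ hv
          rw [← h4]; exact h3
      _ = L * ‖v‖ ^ 2 * t := by ring
  have key : ∀ ⦃t : ℝ⦄, t ∈ Set.Icc (0 : ℝ) 1 →
      F (x + t • v) - t * ⟪gradient F x, v⟫ ≤ F x + L * ‖v‖ ^ 2 * t ^ 2 / 2 :=
    image_le_of_deriv_right_le_deriv_boundary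
      (fun t _ => ((hfd t).continuousAt).continuousWithinAt)
      (fun t _ => (hfd t).hasDerivWithinAt)
      (by simp)
      (fun t _ => ((hBd t).continuousAt).continuousWithinAt)
      (fun t _ => (hBd t).hasDerivWithinAt)
      hbound
  have h := key (Set.mem_Icc.mpr ⟨zero_le_one, le_refl 1⟩)
  simp only [one_smul, one_mul, one_pow, mul_one] at h
  linarith

/-- Deterministic per-round progress inequality in the proof of Theorem 1. -/
theorem per_round_progress
    (H : Type*) [NormedAddCommGroup H] [InnerProductSpace ℝ H] [CompleteSpace H]
    (F : H → ℝ) (hF : Differentiable ℝ F)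
    (L : ℝ) (hL : 0 ≤ L)
    (hgradLip : ∀ x y : H, ‖gradient F x - gradient F y‖ ≤ L * ‖x - y‖)
    (Fstar μ : ℝ) (hμ : 0 < μ)
    (hFlb : ∀ θ : H, Fstar ≤ F θ)
    (hPL : ∀ θ : H, (1 / 2) * ‖gradient F θ‖ ^ 2 ≥ μ * (F θ - Fstar))
    (θ : H) (η : ℝ) (hη : 0 < η) (G : ℝ) (hG : 0 ≤ G)
    (U B E : H) (hU : U = gradient F θ - B + E) (hUnorm : ‖U‖ ≤ G) :
    F (θ - η • U) - Fstar
      ≤ (1 - η * μ) * (F θ - Fstar) + η * ‖B‖ ^ 2 + η * ‖E‖ ^ 2 + L * η ^ 2 * G ^ 2 / 2 := by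
  set g := gradient F θ with hg
  have hdesc := descent_lemma_aux F hF L hgradLip θ (-(η • U))
  rw [← sub_eq_add_neg] at hdesc
  have hinner : ⟪g, -(η • U)⟫ = -η * ⟪g, U⟫ := by
    rw [inner_neg_right, real_inner_smul_right]; ring
  have hUinner : ⟪g, U⟫ = ‖g‖ ^ 2 - ⟪g, B⟫ + ⟪g, E⟫ := by
    rw [hU, inner_add_right, inner_sub_right, real_inner_self_eq_norm_sq]
  have hgB : ⟪g, B⟫ ≤ (1 / 4) * ‖g‖ ^ 2 + ‖B‖ ^ 2 := by
    have h1 : ⟪g, B⟫ ≤ ‖g‖ * ‖B‖ := real_inner_le_norm _ _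
    nlinarith [sq_nonneg (‖g‖ / 2 - ‖B‖)]
  have hgE : -⟪g, E⟫ ≤ (1 / 4) * ‖g‖ ^ 2 + ‖E‖ ^ 2 := by
    have h1 : -⟪g, E⟫ ≤ ‖g‖ * ‖E‖ := by
      have := real_inner_le_norm g (-E)
      simpa [inner_neg_right] using this
    nlinarith [sq_nonneg (‖g‖ / 2 - ‖E‖)]
  have hnormsq : ‖-(η • U)‖ ^ 2 = η ^ 2 * ‖U‖ ^ 2 := by
    rw [norm_neg, norm_smul, Real.norm_eq_abs, mul_pow, sq_abs]
  have hU2 : ‖U‖ ^ 2 ≤ G ^ 2 := by nlinarith [norm_nonneg U]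
  have hPLθ := hPL θ
  have hquad : L / 2 * ‖-(η • U)‖ ^ 2 ≤ L * η ^ 2 * G ^ 2 / 2 := by
    rw [hnormsq]
    have h1 : η ^ 2 * ‖U‖ ^ 2 ≤ η ^ 2 * G ^ 2 :=
      mul_le_mul_of_nonneg_left hU2 (sq_nonneg η)
    have h2 := mul_le_mul_of_nonneg_left h1 (div_nonneg hL (by norm_num : (0:ℝ) ≤ 2))
    linarith
  rw [← hg] at hdesc hPLθ
  rw [hinner, hUinner] at hdesc
  have hPL' : η * (μ * (F θ - Fstar)) ≤ η * (1 / 2 * ‖g‖ ^ 2) :=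
    mul_le_mul_of_nonneg_left hPLθ hη.le
  have hgB' := mul_le_mul_of_nonneg_left hgB hη.le
  have hgE' := mul_le_mul_of_nonneg_left hgE hη.le
  nlinarith [hdesc, hquad, hPL', hgB', hgE']
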